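/- arXiv:1704.02869 — 10 statements merged into one kernel-verified Lean document; each statement's English description precedes it below -/
import Mathlib

section
/- For every tree G of order n ≥ 2, the J-chromatic number of G equals 2; that is, G admits a maximal proper vertex colouring in which every vertex's closed neighbourhood meets every colour class, and the maximum number of colours in such a colouring is 2. -/
open SimpleGraph

/-- A proper colouring of `G` with `k` colours in which every vertex's closed
neighbourhood meets every colour class (a J-colouring). -/
def IsJCol {V : Type*} (G : SimpleGraph V) {k : ℕ} (c : V → Fin k) : Prop :=
  (∀ u v, G.Adj u v → c u ≠ c v) ∧
  (∀ v : V, ∀ i : Fin k, ∃ u, (u = v ∨ G.Adj v u) ∧ c u = i)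

/-- `G` admits a J-colouring with `k` colours. -/
def HasJCol {V : Type*} (G : SimpleGraph V) (k : ℕ) : Prop :=
  ∃ c : V → Fin k, IsJCol G c

/-- The J-chromatic number: the maximum number of colours in a J-colouring. -/
noncomputable def Jnum {V : Type*} (G : SimpleGraph V) : ℕ :=
  sSup {k | HasJCol G k}

/-- A proper colouring in which every internal vertex (degree ≥ 2) has its closed
neighbourhood meeting every colour class (a J*-colouring). -/
def IsJStarCol {V : Type*} (G : SimpleGraph V) {k : ℕ} (c : V → Fin k) : Prop :=
  (∀ u v, G.Adj u v → c u ≠ c v) ∧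
  (∀ v : V, (∃ a b, a ≠ b ∧ G.Adj v a ∧ G.Adj v b) →
    ∀ i : Fin k, ∃ u, (u = v ∨ G.Adj v u) ∧ c u = i)

/-- `G` admits a J*-colouring with `k` colours. -/
def HasJStarCol {V : Type*} (G : SimpleGraph V) (k : ℕ) : Prop :=
  ∃ c : V → Fin k, IsJStarCol G c

/-- The modified J-chromatic number. -/
noncomputable def JStarNum {V : Type*} (G : SimpleGraph V) : ℕ :=
  sSup {k | HasJStarCol G k}

section Aux
variable {V : Type*} (G : SimpleGraph V)

/-- length of the unique path from r to v -/
noncomputable def plen (hT : G.IsTree) (r v : V) : ℕ :=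
  (hT.existsUnique_path r v).choose.length

lemma plen_eq (hT : G.IsTree) (r v : V) (p : G.Walk r v) (hp : p.IsPath) :
    plen G hT r v = p.length := by
  have h := (hT.existsUnique_path r v).choose_spec
  rw [h.2 p hp]; rfl

lemma plen_adj (hT : G.IsTree) (r : V) {u v : V} (h : G.Adj u v) :
    plen G hT r v = plen G hT r u + 1 ∨ plen G hT r u = plen G hT r v + 1 := by
  classical
  obtain ⟨p, hp⟩ := (hT.existsUnique_path r u)
  have hpl : plen G hT r u = p.length := plen_eq G hT r u p hp.1
  by_cases hv : v ∈ p.support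
  · right
    have htp : (p.takeUntil v hv).IsPath := hp.1.takeUntil hv
    have hdp : (p.dropUntil v hv).IsPath := hp.1.dropUntil hv
    have hsingle : (SimpleGraph.Walk.cons h.symm .nil : G.Walk v u).IsPath := by
      simp [Walk.isPath_def, h.ne']
    have huniq := (hT.existsUnique_path v u).unique hdp hsingle
    have hlen : (p.takeUntil v hv).length + (p.dropUntil v hv).length = p.length := by
      rw [← Walk.length_append, p.take_spec hv]
    have h1 : (p.dropUntil v hv).length = 1 := by rw [huniq]; rfl
    have h2 : plen G hT r v = (p.takeUntil v hv).length := plen_eq G hT r v _ htp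
    omega
  · left
    have hq : ((SimpleGraph.Walk.cons h.symm p.reverse).reverse : G.Walk r v).IsPath := by
      apply Walk.IsPath.reverse
      exact hp.1.reverse.cons (by simpa using hv)
    have := plen_eq G hT r v _ hq
    simp [Walk.length_reverse] at this
    omega
end Aux

/-- Every tree of order at least 2 has J-chromatic number 2. -/
theorem tree_Jnum_eq_two {V : Type*} [Fintype V] (G : SimpleGraph V)
    (hT : G.IsTree) (hn : 2 ≤ Fintype.card V) :
    HasJCol G 2 ∧ Jnum G = 2 := by
  classical
  obtain ⟨r⟩ : Nonempty V := Fintype.card_pos_iff.mp (by omega)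
  set c : V → Fin 2 := fun v => ⟨plen G hT r v % 2, Nat.mod_lt _ two_pos⟩ with hc
  have hproper : ∀ u v, G.Adj u v → c u ≠ c v := by
    intro u v h hcc
    have := congrArg Fin.val hcc
    simp only [hc] at this
    rcases plen_adj G hT r h with h1 | h1 <;> omega
  have hnbr : ∀ v : V, ∃ u, G.Adj v u := by
    intro v
    obtain ⟨w, hw⟩ := Fintype.exists_ne_of_one_lt_card (by omega) v
    obtain ⟨p⟩ := hT.isConnected.preconnected v w
    cases p with
    | nil => exact absurd rfl hw.symm
    | cons h q => exact ⟨_, h⟩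
  have hJ2 : HasJCol G 2 := by
    refine ⟨c, hproper, fun v i => ?_⟩
    obtain ⟨u, hu⟩ := hnbr v
    have hne := hproper v u hu
    have h1 : (c v).val < 2 := (c v).isLt
    have h2 : (c u).val < 2 := (c u).isLt
    have h3 : i.val < 2 := i.isLt
    have hne' : (c v).val ≠ (c u).val := fun h => hne (Fin.ext h)
    by_cases hiv : i.val = (c v).val
    · exact ⟨v, Or.inl rfl, (Fin.ext hiv).symm⟩
    · exact ⟨u, Or.inr hu, (Fin.ext (by omega)).symm⟩
  have hbound : ∀ k, HasJCol G k → k ≤ 2 := by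
    intro k ⟨d, hd⟩
    -- a tree has a leaf
    have hleaf : ∃ v, G.degree v ≤ 1 := by
      by_contra hcon
      push_neg at hcon
      have hsum := G.sum_degrees_eq_twice_card_edges
      have hcard := hT.card_edgeFinset
      have hge : 2 * Fintype.card V ≤ ∑ v, G.degree v := by
        calc 2 * Fintype.card V = ∑ _v : V, 2 := by
              rw [Finset.sum_const, smul_eq_mul, Finset.card_univ, mul_comm]
          _ ≤ _ := Finset.sum_le_sum fun v _ => hcon v
      omega
    obtain ⟨v, hv⟩ := hleaf
    set N : Finset V := insert v (G.neighborFinset v) with hN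
    have hNcard : N.card ≤ 2 := by
      calc N.card ≤ (G.neighborFinset v).card + 1 := Finset.card_insert_le _ _
        _ = G.degree v + 1 := by rw [G.card_neighborFinset_eq_degree]
        _ ≤ 2 := by omega
    choose f hf1 hf2 using hd.2 v
    have hmaps : ∀ i : Fin k, f i ∈ N := by
      intro i
      rcases hf1 i with h | h
      · rw [h]; exact Finset.mem_insert_self _ _
      · exact Finset.mem_insert_of_mem (by rwa [mem_neighborFinset])
    have hinj : Function.Injective f := by
      intro i j hij
      rw [← hf2 i, ← hf2 j, hij]
    calc k = (Finset.univ : Finset (Fin k)).card := by simp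
      _ ≤ N.card := Finset.card_le_card_of_injOn f (fun i _ => hmaps i)
          (fun i _ j _ h => hinj h)
      _ ≤ 2 := hNcard
  refine ⟨hJ2, le_antisymm ?_ ?_⟩
  · exact csSup_le ⟨2, hJ2⟩ fun k hk => hbound k hk
  · exact le_csSup ⟨2, fun k hk => hbound k hk⟩ hJ2
end

section
/- For the star K_{1,n} with n ≥ 2, J(K_{1,n}) = 2 and J*(K_{1,n}) = n + 1. -/
open SimpleGraph

section Aux

variable (n : ℕ)

lemma star_adj (x y : Fin 1 ⊕ Fin n) :
    (completeBipartiteGraph (Fin 1) (Fin n)).Adj x y ↔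
      (x.isLeft ∧ y.isRight ∨ x.isRight ∧ y.isLeft) := Iff.rfl

lemma hasJCol_two (hn : 1 ≤ n) : HasJCol (completeBipartiteGraph (Fin 1) (Fin n)) 2 := by
  refine ⟨fun v => Sum.elim (fun _ => 0) (fun _ => 1) v, ?_, ?_⟩
  · rintro (a | a) (b | b) hab <;> simp_all [star_adj]
  · rintro (a | a) i
    · fin_cases i
      · exact ⟨Sum.inl a, Or.inl rfl, rfl⟩
      · exact ⟨Sum.inr ⟨0, hn⟩, Or.inr (by simp [star_adj]), rfl⟩
    · fin_cases i
      · exact ⟨Sum.inl 0, Or.inr (by simp [star_adj]), rfl⟩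
      · exact ⟨Sum.inr a, Or.inl rfl, rfl⟩

lemma jcol_le_two {k : ℕ} (hn : 1 ≤ n)
    (h : HasJCol (completeBipartiteGraph (Fin 1) (Fin n)) k) : k ≤ 2 := by
  obtain ⟨c, _, hcov⟩ := h
  have key : ∀ i : Fin k, ∃ u ∈ ({Sum.inr ⟨0, hn⟩, Sum.inl 0} :
      Finset (Fin 1 ⊕ Fin n)), c u = i := by
    intro i
    obtain ⟨u, hu, hcu⟩ := hcov (Sum.inr ⟨0, hn⟩) i
    refine ⟨u, ?_, hcu⟩
    rcases hu with rfl | hadj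
    · simp
    · rcases u with a | a
      · simp [Fin.fin_one_eq_zero a]
      · simp [star_adj] at hadj
  choose f hf hcf using key
  have : (Finset.univ : Finset (Fin k)).card ≤
      ({Sum.inr ⟨0, hn⟩, Sum.inl 0} : Finset (Fin 1 ⊕ Fin n)).card := by
    apply Finset.card_le_card_of_injOn f (fun i _ => hf i)
    intro i _ j _ hij
    rw [← hcf i, ← hcf j, hij]
  simpa using this.trans ((Finset.card_insert_le _ _).trans (by simp))

lemma hasJStarCol (hn : 2 ≤ n) :
    HasJStarCol (completeBipartiteGraph (Fin 1) (Fin n)) (n + 1) := by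
  refine ⟨fun v => Sum.elim (fun _ => 0) (fun b => b.succ) v, ?_, ?_⟩
  · rintro (a | a) (b | b) hab <;>
      simp_all [star_adj, (Fin.succ_ne_zero _).symm, Fin.succ_ne_zero]
  · rintro (a | a) ⟨x, y, hxy, hx, hy⟩ i
    · induction i using Fin.cases with
      | zero => exact ⟨Sum.inl a, Or.inl rfl, rfl⟩
      | succ j => exact ⟨Sum.inr j, Or.inr (by simp [star_adj]), rfl⟩
    · exfalso
      rcases x with x | x
      · rcases y with y | y
        · exact hxy (by simp [Fin.fin_one_eq_zero x, Fin.fin_one_eq_zero y])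
        · simp [star_adj] at hy
      · simp [star_adj] at hx

lemma jstarcol_le {k : ℕ} (hn : 2 ≤ n)
    (h : HasJStarCol (completeBipartiteGraph (Fin 1) (Fin n)) k) : k ≤ n + 1 := by
  obtain ⟨c, _, hcov⟩ := h
  have hint : ∃ a b, a ≠ b ∧ (completeBipartiteGraph (Fin 1) (Fin n)).Adj (Sum.inl 0) a ∧
      (completeBipartiteGraph (Fin 1) (Fin n)).Adj (Sum.inl 0) b := by
    refine ⟨Sum.inr ⟨0, by omega⟩, Sum.inr ⟨1, by omega⟩, ?_, by simp [star_adj],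
      by simp [star_adj]⟩
    simp [Fin.ext_iff]
  choose f _ hcf using hcov (Sum.inl 0) hint
  have hinj : Function.Injective f := by
    intro i j hij
    rw [← hcf i, ← hcf j, hij]
  have := Fintype.card_le_of_injective f hinj
  simpa [add_comm] using this

end Aux

/-- For the star `K_{1,n}` with `n ≥ 2`, `J(K_{1,n}) = 2` and `J*(K_{1,n}) = n + 1`. -/
theorem star_Jnum_JStarNum (n : ℕ) (hn : 2 ≤ n) :
    Jnum (completeBipartiteGraph (Fin 1) (Fin n)) = 2 ∧
    JStarNum (completeBipartiteGraph (Fin 1) (Fin n)) = n + 1 := by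
  have h1 : (1:ℕ) ≤ n := by omega
  constructor
  · apply le_antisymm
    · exact csSup_le ⟨2, hasJCol_two n h1⟩ (fun k hk => jcol_le_two n h1 hk)
    · exact le_csSup ⟨2, fun k hk => jcol_le_two n h1 hk⟩ (hasJCol_two n h1)
  · apply le_antisymm
    · exact csSup_le ⟨n + 1, hasJStarCol n hn⟩ (fun k hk => jstarcol_le n hn hk)
    · exact le_csSup ⟨n + 1, fun k hk => jstarcol_le n hn hk⟩ (hasJStarCol n hn)
end

section
/- For any connected graph G that admits a J-colouring, J(G) ≤ δ(G) + 1, where δ(G) is the minimum degree of G. -/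
open SimpleGraph

/-- For any connected graph `G` admitting a J-colouring, `J(G) ≤ δ(G) + 1`. -/
theorem Jnum_le_minDegree_add_one {V : Type*} [Fintype V] (G : SimpleGraph V)
    [DecidableRel G.Adj] (hconn : G.Connected) (h : ∃ k, HasJCol G k) :
    Jnum G ≤ G.minDegree + 1 := by
  classical
  have hne : Nonempty V := hconn.nonempty
  apply csSup_le
  · obtain ⟨k, hk⟩ := h; exact ⟨k, hk⟩
  · intro k hk
    obtain ⟨c, hprop, hdom⟩ := hk
    obtain ⟨w, hw⟩ := G.exists_minimal_degree_vertex
    choose f hf1 hf2 using hdom w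
    have hinj : Function.Injective f := fun i j hij => by
      rw [← hf2 i, ← hf2 j, hij]
    have hmem : ∀ i, f i ∈ insert w (G.neighborFinset w) := by
      intro i
      rcases hf1 i with h1 | h1
      · simp [h1]
      · simp [SimpleGraph.mem_neighborFinset, h1]
    have hcard : k ≤ (insert w (G.neighborFinset w)).card := by
      have := Finset.card_le_card_of_injOn (s := Finset.univ) f (fun i _ => hmem i)
        (fun a _ b _ h => hinj h)
      simpa using this
    have : (insert w (G.neighborFinset w)).card = G.degree w + 1 := by
      rw [Finset.card_insert_of_notMem (by simp), SimpleGraph.card_neighborFinset_eq_degree]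
    rw [this] at hcard
    rw [hw]
    exact hcard
end

section
/- If H admits a J-colouring, then the corona K_1 ∘ H admits a J-colouring and J(K_1 ∘ H) = J(H) + 1. -/
open SimpleGraph

/-- The corona `K₁ ∘ H`: a new vertex (`none`) adjacent to every vertex of `H`. -/
def coneGraph {W : Type*} (H : SimpleGraph W) : SimpleGraph (Option W) where
  Adj x y :=
    match x, y with
    | none, some _ => True
    | some _, none => True
    | some a, some b => H.Adj a b
    | none, none => False
  symm := by constructor; rintro (_ | a) (_ | b) h <;> simp_all <;> exact h.symm
  loopless := by constructor; rintro (_ | a) h <;> simp_all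

section Aux

variable {W : Type*}

lemma cone_adj_none_some (H : SimpleGraph W) (w : W) :
    (coneGraph H).Adj none (some w) := trivial

lemma cone_adj_some_none (H : SimpleGraph W) (w : W) :
    (coneGraph H).Adj (some w) none := trivial

lemma cone_adj_some_some (H : SimpleGraph W) {a b : W} :
    (coneGraph H).Adj (some a) (some b) ↔ H.Adj a b := Iff.rfl

/-- Forward construction: extend a surjective J-colouring of `H` by a fresh colour. -/
lemma hasJCol_cone_of {H : SimpleGraph W} {k : ℕ} (c : W → Fin k) (hc : IsJCol H c)
    (hs : Function.Surjective c) : HasJCol (coneGraph H) (k + 1) := by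
  refine ⟨fun x => x.elim (Fin.last k) (fun w => (c w).castSucc), ?_, ?_⟩
  · rintro (_ | u) (_ | v) h
    · exact absurd h (fun h => h)
    · exact (Fin.castSucc_lt_last (c v)).ne'
    · exact (Fin.castSucc_lt_last (c u)).ne
    · have := hc.1 u v h
      simpa [Fin.castSucc_inj] using this
  · rintro (_ | v) i
    · rcases eq_or_ne i (Fin.last k) with rfl | hi
      · exact ⟨none, Or.inl rfl, rfl⟩
      · obtain ⟨j, rfl⟩ := Fin.exists_castSucc_eq.mpr hi
        obtain ⟨w, hw⟩ := hs j
        exact ⟨some w, Or.inr (cone_adj_none_some H w), by simp [hw]⟩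
    · rcases eq_or_ne i (Fin.last k) with rfl | hi
      · exact ⟨none, Or.inr (cone_adj_some_none H v), rfl⟩
      · obtain ⟨j, rfl⟩ := Fin.exists_castSucc_eq.mpr hi
        obtain ⟨u, hu, hcu⟩ := hc.2 v j
        refine ⟨some u, ?_, by simp [hcu]⟩
        rcases hu with rfl | h
        · exact Or.inl rfl
        · exact Or.inr h

/-- Backward construction: delete the apex colour. -/
lemma hasJCol_of_cone {H : SimpleGraph W} {k : ℕ} (h : HasJCol (coneGraph H) (k + 1)) :
    HasJCol H k := by
  obtain ⟨c, hp, hcov⟩ := h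
  set a := c none with ha
  have hne : ∀ w, c (some w) ≠ a := fun w => hp _ _ (cone_adj_some_none H w)
  set e := finSuccEquiv' a with he
  have hsome : ∀ w, (e (c (some w))).isSome := by
    intro w
    refine Option.isSome_iff_ne_none.mpr (fun h0 => hne w ?_)
    exact e.injective (h0.trans (finSuccEquiv'_at a).symm)
  refine ⟨fun w => (e (c (some w))).get (hsome w), ?_, ?_⟩
  · intro u v huv hEq
    apply hp (some u) (some v) ((cone_adj_some_some H).mpr huv)
    apply e.injective
    rw [← Option.some_get (hsome u), ← Option.some_get (hsome v)]
    exact congrArg some hEq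
  · intro v j
    set i := e.symm (some j) with hi
    have hia : i ≠ a := by
      intro h
      have : (some j : Option (Fin k)) = none := by
        rw [← finSuccEquiv'_at a, ← he, ← h, hi, Equiv.apply_symm_apply]
      simp at this
    obtain ⟨u, hu, hcu⟩ := hcov (some v) i
    match u with
    | none =>
      exact absurd (ha.trans hcu) (Ne.symm hia)
    | some u' =>
      refine ⟨u', ?_, ?_⟩
      · rcases hu with h | h
        · exact Or.inl (by injection h)
        · exact Or.inr ((cone_adj_some_some H).mp h)
      · have : e (c (some u')) = some j := by rw [hcu, hi, Equiv.apply_symm_apply]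
        simp [this]

/-- Boundedness of the number of colours in a J-colouring. -/
lemma hasJCol_le {V : Type*} [Fintype V] [Nonempty V] {G : SimpleGraph V} {k : ℕ}
    (h : HasJCol G k) : k ≤ Fintype.card V := by
  obtain ⟨c, _, hcov⟩ := h
  obtain ⟨v⟩ := ‹Nonempty V›
  have hs : Function.Surjective c := by
    intro i
    obtain ⟨u, _, hu⟩ := hcov v i
    exact ⟨u, hu⟩
  simpa using Fintype.card_le_of_surjective c hs

lemma jcol_surjective {V : Type*} [Nonempty V] {G : SimpleGraph V} {k : ℕ}
    {c : V → Fin k} (hc : IsJCol G c) : Function.Surjective c := by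
  obtain ⟨v⟩ := ‹Nonempty V›
  intro i
  obtain ⟨u, _, hu⟩ := hc.2 v i
  exact ⟨u, hu⟩

end Aux

/-- If `H` admits a J-colouring then so does `K₁ ∘ H`, and `J(K₁ ∘ H) = J(H) + 1`. -/
theorem coneGraph_Jnum {W : Type*} [Fintype W] (H : SimpleGraph W)
    (hH : ∃ k, HasJCol H k) :
    (∃ k, HasJCol (coneGraph H) k) ∧ Jnum (coneGraph H) = Jnum H + 1 := by
  classical
  by_cases hW : Nonempty W
  · obtain ⟨k0, hk0⟩ := hH
    set S : Set ℕ := {k | HasJCol H k} with hS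
    set T : Set ℕ := {k | HasJCol (coneGraph H) k} with hT
    have hSne : S.Nonempty := ⟨k0, hk0⟩
    have hSbdd : BddAbove S := ⟨Fintype.card W, fun k hk => hasJCol_le hk⟩
    have hTbdd : BddAbove T := ⟨Fintype.card (Option W), fun k hk => hasJCol_le hk⟩
    have hmemS : sSup S ∈ S := Nat.sSup_mem hSne hSbdd
    obtain ⟨c, hc⟩ := hmemS
    have hconeJ : HasJCol (coneGraph H) (sSup S + 1) :=
      hasJCol_cone_of c hc (jcol_surjective hc)
    have hTne : T.Nonempty := ⟨_, hconeJ⟩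
    have h1 : sSup S + 1 ≤ sSup T := le_csSup hTbdd hconeJ
    have hmemT : sSup T ∈ T := Nat.sSup_mem hTne hTbdd
    have hT1 : 1 ≤ sSup T := le_trans (Nat.le_add_left 1 _) h1
    obtain ⟨m, hm⟩ : ∃ m, sSup T = m + 1 := ⟨sSup T - 1, by omega⟩
    have hmS : m ∈ S := hasJCol_of_cone (hm ▸ hmemT)
    have h2 : sSup T ≤ sSup S + 1 := by
      rw [hm]
      exact Nat.add_le_add_right (le_csSup hSbdd hmS) 1
    exact ⟨⟨_, hconeJ⟩, by simp only [Jnum, ← hS, ← hT]; omega⟩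
  · -- W is empty
    have hWe : IsEmpty W := not_nonempty_iff.mp hW
    -- H admits every k-J-colouring
    have hall : ∀ k, HasJCol H k := fun k =>
      ⟨fun w => (hWe.false w).elim, fun u w h => (hWe.false w).elim,
        fun v => (hWe.false v).elim⟩
    have hSnobdd : ¬BddAbove {k | HasJCol H k} := by
      rintro ⟨b, hb⟩
      exact absurd (hb (hall (b + 1))) (by omega)
    have hJH : Jnum H = 0 := by
      rw [Jnum, csSup_of_not_bddAbove hSnobdd, csSup_empty]
      rfl
    have hcone1 : HasJCol (coneGraph H) 1 := by
      refine ⟨fun _ => 0, ?_, ?_⟩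
      · rintro (_ | u) (_ | v) h
        · exact absurd h (fun h => h)
        · exact (hWe.false v).elim
        · exact (hWe.false u).elim
        · exact (hWe.false u).elim
      · rintro (_ | v) i
        · exact ⟨none, Or.inl rfl, Subsingleton.elim _ _⟩
        · exact (hWe.false v).elim
    have hTeq : {k | HasJCol (coneGraph H) k} = {1} := by
      ext m
      simp only [Set.mem_setOf_eq, Set.mem_singleton_iff]
      constructor
      · rintro ⟨c, hp, hcov⟩
        by_contra hm
        have hm1 : 1 < m ∨ m = 0 := by omega
        rcases hm1 with hm1 | hm0
        · have : Nontrivial (Fin m) := Fin.nontrivial_iff_two_le.mpr hm1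
          obtain ⟨i, hi⟩ := exists_ne (c none)
          obtain ⟨u, hu, hcu⟩ := hcov none i
          match u with
          | none =>
            rcases hu with _ | h
            · exact hi (hcu ▸ rfl)
            · exact h
          | some w => exact (hWe.false w).elim
        · subst hm0; exact (c none).elim0
      · rintro rfl; exact hcone1
    have hJT : Jnum (coneGraph H) = 1 := by
      rw [Jnum, hTeq, csSup_singleton]
    exact ⟨⟨1, hcone1⟩, by rw [hJT, hJH]⟩
end

section
/- If graphs G and H both admit J-colourings, then the join G + H admits a J-colouring, and J(G + H) = J(G) + J(H). -/
open SimpleGraph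

/-- The join `G + H`: disjoint union of `G` and `H` with all edges in between. -/
def joinGraph {V W : Type*} (G : SimpleGraph V) (H : SimpleGraph W) :
    SimpleGraph (V ⊕ W) where
  Adj x y :=
    match x, y with
    | Sum.inl u, Sum.inl v => G.Adj u v
    | Sum.inr a, Sum.inr b => H.Adj a b
    | Sum.inl _, Sum.inr _ => True
    | Sum.inr _, Sum.inl _ => True
  symm := ⟨by rintro (u | a) (v | b) h <;> simp_all <;> exact h.symm⟩
  loopless := ⟨by rintro (u | a) h <;> simp_all⟩

lemma hasJCol_of_isEmpty {V : Type*} [IsEmpty V] (G : SimpleGraph V) (k : ℕ) :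
    HasJCol G k :=
  ⟨fun v => isEmptyElim v, fun u => isEmptyElim u, fun v => isEmptyElim v⟩

lemma jnum_of_isEmpty {V : Type*} [IsEmpty V] (G : SimpleGraph V) : Jnum G = 0 := by
  have hnb : ¬ BddAbove {k | HasJCol G k} := by
    rintro ⟨b, hb⟩
    have h1 := hb (show b + 1 ∈ {k | HasJCol G k} from hasJCol_of_isEmpty G (b+1))
    omega
  rw [Jnum, csSup_of_not_bddAbove hnb, csSup_empty]
  rfl

lemma hasJCol_le_card {V : Type*} [Fintype V] [Nonempty V] (G : SimpleGraph V)
    {k : ℕ} (h : HasJCol G k) : k ≤ Fintype.card V := by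
  obtain ⟨c, _, hc2⟩ := h
  obtain ⟨v0⟩ := ‹Nonempty V›
  have hsurj : Function.Surjective c := fun i => by
    obtain ⟨u, _, hu⟩ := hc2 v0 i; exact ⟨u, hu⟩
  simpa using Fintype.card_le_of_surjective c hsurj

lemma bddAbove_hasJCol {V : Type*} [Fintype V] [Nonempty V] (G : SimpleGraph V) :
    BddAbove {k | HasJCol G k} :=
  ⟨Fintype.card V, fun _ hk => hasJCol_le_card G hk⟩

lemma hasJCol_jnum {V : Type*} [Fintype V] (G : SimpleGraph V)
    (hG : ∃ k, HasJCol G k) : HasJCol G (Jnum G) := by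
  by_cases h : Nonempty V
  · exact Nat.sSup_mem (hG.imp fun k hk => hk) (bddAbove_hasJCol G)
  · have : IsEmpty V := not_nonempty_iff.mp h
    rw [jnum_of_isEmpty]
    exact hasJCol_of_isEmpty G 0

lemma jnum_ne_zero_nonempty {V : Type*} [Fintype V] (G : SimpleGraph V)
    (h : Jnum G ≠ 0) : Nonempty V := by
  by_contra hn
  have : IsEmpty V := not_nonempty_iff.mp hn
  exact h (jnum_of_isEmpty G)

lemma hasJCol_join {V W : Type*} (G : SimpleGraph V) (H : SimpleGraph W)
    {kG kH : ℕ} {cG : V → Fin kG} {cH : W → Fin kH}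
    (hcG : IsJCol G cG) (hcH : IsJCol H cH)
    (hV : kG ≠ 0 → Nonempty V) (hW : kH ≠ 0 → Nonempty W) :
    HasJCol (joinGraph G H) (kG + kH) := by
  refine ⟨Sum.elim (fun v => Fin.castAdd kH (cG v)) (fun w => Fin.natAdd kG (cH w)), ?_, ?_⟩
  · rintro (u | a) (v | b) hadj <;> intro heq
    · exact hcG.1 u v hadj (by simpa [Fin.ext_iff] using heq)
    · simp only [Sum.elim_inl, Sum.elim_inr, Fin.ext_iff, Fin.coe_castAdd,
        Fin.coe_natAdd] at heq
      omega
    · simp only [Sum.elim_inl, Sum.elim_inr, Fin.ext_iff, Fin.coe_castAdd,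
        Fin.coe_natAdd] at heq
      omega
    · exact hcH.1 a b hadj (by simpa [Fin.ext_iff] using heq)
  · rintro (v | w) i
    · rcases lt_or_ge i.val kG with hi | hi
      · obtain ⟨u, hu, hcu⟩ := hcG.2 v ⟨i.val, hi⟩
        refine ⟨Sum.inl u, ?_, by simp [Fin.ext_iff, hcu]⟩
        rcases hu with rfl | hu
        · exact Or.inl rfl
        · exact Or.inr hu
      · have hkH : kH ≠ 0 := by have := i.isLt; omega
        obtain ⟨w0⟩ := hW hkH
        obtain ⟨u, _, hcu⟩ := hcH.2 w0 ⟨i.val - kG, by have := i.isLt; omega⟩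
        refine ⟨Sum.inr u, Or.inr trivial, ?_⟩
        simp only [Sum.elim_inr, Fin.ext_iff, Fin.coe_natAdd, hcu]
        omega
    · rcases lt_or_ge i.val kG with hi | hi
      · have hkG : kG ≠ 0 := by omega
        obtain ⟨v0⟩ := hV hkG
        obtain ⟨u, _, hcu⟩ := hcG.2 v0 ⟨i.val, hi⟩
        refine ⟨Sum.inl u, Or.inr trivial, ?_⟩
        simp [Fin.ext_iff, hcu]
      · obtain ⟨u, hu, hcu⟩ := hcH.2 w ⟨i.val - kG, by have := i.isLt; omega⟩
        refine ⟨Sum.inr u, ?_, ?_⟩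
        · rcases hu with rfl | hu
          · exact Or.inl rfl
          · exact Or.inr hu
        · simp only [Sum.elim_inr, Fin.ext_iff, Fin.coe_natAdd, hcu]
          omega

lemma join_colours_disjoint {V W : Type*} {G : SimpleGraph V} {H : SimpleGraph W}
    {k : ℕ} {c : V ⊕ W → Fin k} (hc : IsJCol (joinGraph G H) c)
    {i : Fin k} {v : V} {w : W} (h1 : c (Sum.inl v) = i) (h2 : c (Sum.inr w) = i) :
    False :=
  hc.1 (Sum.inl v) (Sum.inr w) trivial (h1.trans h2.symm)

lemma join_restrict_left {V W : Type*} [Fintype V] [Fintype W]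
    {G : SimpleGraph V} {H : SimpleGraph W}
    {k : ℕ} {c : V ⊕ W → Fin k} (hc : IsJCol (joinGraph G H) c) :
    HasJCol G (Finset.image (fun v => c (Sum.inl v)) Finset.univ).card := by
  set A := Finset.image (fun v => c (Sum.inl v)) Finset.univ with hA
  let e := A.orderIsoOfFin rfl
  have hmem : ∀ v : V, c (Sum.inl v) ∈ A := fun v => Finset.mem_image_of_mem _ (Finset.mem_univ v)
  refine ⟨fun v => e.symm ⟨c (Sum.inl v), hmem v⟩, ?_, ?_⟩
  · intro u v hadj heq
    have : c (Sum.inl u) = c (Sum.inl v) := by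
      have := e.symm.injective heq
      exact congrArg Subtype.val this
    exact hc.1 (Sum.inl u) (Sum.inl v) hadj this
  · intro v i
    have hje : ((e i : A) : Fin k) ∈ A := (e i).2
    obtain ⟨u, hu, hcu⟩ := hc.2 (Sum.inl v) (e i : A)
    rcases u with v' | w
    · refine ⟨v', ?_, ?_⟩
      · rcases hu with h | h
        · exact Or.inl (Sum.inl.inj h)
        · exact Or.inr h
      · have h2 : (⟨c (Sum.inl v'), hmem v'⟩ : A) = e i := Subtype.ext hcu
        show e.symm ⟨c (Sum.inl v'), hmem v'⟩ = i
        rw [h2, e.symm_apply_apply]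
    · exfalso
      obtain ⟨j, -, hj⟩ := Finset.mem_image.mp hje
      exact join_colours_disjoint hc hj hcu

lemma join_restrict_right {V W : Type*} [Fintype V] [Fintype W]
    {G : SimpleGraph V} {H : SimpleGraph W}
    {k : ℕ} {c : V ⊕ W → Fin k} (hc : IsJCol (joinGraph G H) c) :
    HasJCol H (Finset.image (fun w => c (Sum.inr w)) Finset.univ).card := by
  set B := Finset.image (fun w => c (Sum.inr w)) Finset.univ with hB
  let e := B.orderIsoOfFin rfl
  have hmem : ∀ w : W, c (Sum.inr w) ∈ B := fun w => Finset.mem_image_of_mem _ (Finset.mem_univ w)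
  refine ⟨fun w => e.symm ⟨c (Sum.inr w), hmem w⟩, ?_, ?_⟩
  · intro u v hadj heq
    have : c (Sum.inr u) = c (Sum.inr v) := by
      have := e.symm.injective heq
      exact congrArg Subtype.val this
    exact hc.1 (Sum.inr u) (Sum.inr v) hadj this
  · intro w i
    have hje : ((e i : B) : Fin k) ∈ B := (e i).2
    obtain ⟨u, hu, hcu⟩ := hc.2 (Sum.inr w) (e i : B)
    rcases u with v' | w'
    · exfalso
      obtain ⟨j, -, hj⟩ := Finset.mem_image.mp hje
      exact join_colours_disjoint hc hcu hj
    · refine ⟨w', ?_, ?_⟩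
      · rcases hu with h | h
        · exact Or.inl (Sum.inr.inj h)
        · exact Or.inr h
      · have h2 : (⟨c (Sum.inr w'), hmem w'⟩ : B) = e i := Subtype.ext hcu
        show e.symm ⟨c (Sum.inr w'), hmem w'⟩ = i
        rw [h2, e.symm_apply_apply]

lemma join_hasJCol_le {V W : Type*} [Fintype V] [Fintype W]
    (G : SimpleGraph V) (H : SimpleGraph W) [hne : Nonempty (V ⊕ W)]
    {k : ℕ} (h : HasJCol (joinGraph G H) k) : k ≤ Jnum G + Jnum H := by
  obtain ⟨c, hc⟩ := h
  set A := Finset.image (fun v => c (Sum.inl v)) Finset.univ with hA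
  set B := Finset.image (fun w => c (Sum.inr w)) Finset.univ with hB
  have hdisj : Disjoint A B := by
    rw [Finset.disjoint_left]
    intro i hiA hiB
    obtain ⟨v, -, hv⟩ := Finset.mem_image.mp hiA
    obtain ⟨w, -, hw⟩ := Finset.mem_image.mp hiB
    exact join_colours_disjoint hc hv hw
  have hcover : (Finset.univ : Finset (Fin k)) ⊆ A ∪ B := by
    intro i _
    obtain ⟨x⟩ := hne
    obtain ⟨u, -, hu⟩ := hc.2 x i
    rcases u with v | w
    · exact Finset.mem_union_left _ (hu ▸ Finset.mem_image_of_mem _ (Finset.mem_univ v))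
    · exact Finset.mem_union_right _ (hu ▸ Finset.mem_image_of_mem _ (Finset.mem_univ w))
  have hk : k ≤ A.card + B.card := by
    have h1 : (Finset.univ : Finset (Fin k)).card ≤ (A ∪ B).card :=
      Finset.card_le_card hcover
    rw [Finset.card_univ, Fintype.card_fin, Finset.card_union_of_disjoint hdisj] at h1
    exact h1
  have hAle : A.card ≤ Jnum G := by
    by_cases hV : Nonempty V
    · exact le_csSup (bddAbove_hasJCol G) (join_restrict_left hc)
    · have : IsEmpty V := not_nonempty_iff.mp hV
      have : A = ∅ := by
        rw [hA, Finset.univ_eq_empty, Finset.image_empty]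
      simp [this]
  have hBle : B.card ≤ Jnum H := by
    by_cases hW : Nonempty W
    · exact le_csSup (bddAbove_hasJCol H) (join_restrict_right hc)
    · have : IsEmpty W := not_nonempty_iff.mp hW
      have : B = ∅ := by
        rw [hB, Finset.univ_eq_empty, Finset.image_empty]
      simp [this]
  omega

/-- If `G` and `H` admit J-colourings, then so does `G + H`, and
`J(G + H) = J(G) + J(H)`. -/
theorem joinGraph_Jnum {V W : Type*} [Fintype V] [Fintype W]
    (G : SimpleGraph V) (H : SimpleGraph W)
    (hG : ∃ k, HasJCol G k) (hH : ∃ k, HasJCol H k) :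
    (∃ k, HasJCol (joinGraph G H) k) ∧
    Jnum (joinGraph G H) = Jnum G + Jnum H := by
  by_cases hne : Nonempty (V ⊕ W)
  · obtain ⟨cG, hcG⟩ := hasJCol_jnum G hG
    obtain ⟨cH, hcH⟩ := hasJCol_jnum H hH
    have hmem : HasJCol (joinGraph G H) (Jnum G + Jnum H) :=
      hasJCol_join G H hcG hcH (jnum_ne_zero_nonempty G) (jnum_ne_zero_nonempty H)
    refine ⟨⟨_, hmem⟩, le_antisymm ?_ ?_⟩
    · exact csSup_le ⟨_, hmem⟩ fun k hk => join_hasJCol_le G H hk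
    · exact le_csSup ⟨Jnum G + Jnum H, fun k hk => join_hasJCol_le G H hk⟩ hmem
  · have hVW : IsEmpty (V ⊕ W) := not_nonempty_iff.mp hne
    have hV : IsEmpty V := ⟨fun v => hne ⟨Sum.inl v⟩⟩
    have hW : IsEmpty W := ⟨fun w => hne ⟨Sum.inr w⟩⟩
    refine ⟨⟨0, hasJCol_of_isEmpty _ 0⟩, ?_⟩
    rw [jnum_of_isEmpty, jnum_of_isEmpty, jnum_of_isEmpty]
end

section
/- For the cycle C_n (n ≥ 3): if n ≡ 0 (mod 3) then J(C_n) = 3; if n is even and n is not divisible by 3 then J(C_n) = 2; and if n is odd and not divisible by 3 then C_n admits no J-colouring. -/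
open SimpleGraph

namespace CycleJ

open scoped Fin.NatCast Fin.CommRing

variable {m : ℕ}

lemma adj_iff {u v : Fin (m + 3)} :
    (cycleGraph (m + 3)).Adj u v ↔ v = u + 1 ∨ u = v + 1 := by
  have := @cycleGraph_adj (m + 1) u v
  rw [this, sub_eq_iff_eq_add, sub_eq_iff_eq_add, add_comm (1 : Fin (m + 3)) v,
    add_comm (1 : Fin (m + 3)) u]
  tauto

lemma adj_succ (v : Fin (m + 3)) : (cycleGraph (m + 3)).Adj v (v + 1) :=
  adj_iff.mpr (Or.inl rfl)

lemma adj_pred (v : Fin (m + 3)) : (cycleGraph (m + 3)).Adj v (v - 1) :=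
  adj_iff.mpr (Or.inr (by ring))

lemma val_succ (w : Fin (m + 3)) :
    ((w + 1 : Fin (m + 3))).val = if w.val = m + 2 then 0 else w.val + 1 := by
  rw [Fin.val_add_one]
  by_cases h : w.val = m + 2
  · rw [if_pos h, if_pos (Fin.ext h)]
  · rw [if_neg h, if_neg (fun hw => h (by rw [hw]; rfl))]

lemma val_pred (w : Fin (m + 3)) :
    ((w - 1 : Fin (m + 3))).val = if w.val = 0 then m + 2 else w.val - 1 := by
  rw [Fin.coe_sub_one]
  by_cases h : w.val = 0
  · rw [if_pos h, if_pos (Fin.ext h)]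
  · rw [if_neg h, if_neg (fun hw => h (by rw [hw]; rfl))]

lemma cast_succ (j : ℕ) : ((j + 1 : ℕ) : Fin (m + 3)) = (j : Fin (m + 3)) + 1 := by
  push_cast; ring

/-- Any J-colouring of a cycle uses at most 3 colours. -/
lemma k_le_three {k : ℕ} (h : HasJCol (cycleGraph (m + 3)) k) : k ≤ 3 := by
  obtain ⟨c, hproper, hcov⟩ := h
  choose f hf hcf using hcov 0
  have hinj : Function.Injective f := fun i j hij => by
    rw [← hcf i, ← hcf j, hij]
  have hrange : ∀ i, f i ∈ ({0, 1, 0 - 1} : Finset (Fin (m + 3))) := by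
    intro i
    rcases hf i with h | h
    · simp [h]
    · rcases adj_iff.mp h with h | h
      · simp [h, zero_add]
      · have : f i = 0 - 1 := by rw [eq_sub_iff_add_eq, h]
        simp [this]
  calc k = (Finset.univ : Finset (Fin k)).card := by simp
    _ ≤ ({0, 1, 0 - 1} : Finset (Fin (m + 3))).card :=
        Finset.card_le_card_of_injOn f (fun i _ => hrange i) hinj.injOn
    _ ≤ 3 := by
        refine le_trans (Finset.card_insert_le _ _) (Nat.succ_le_succ ?_)
        exact le_trans (Finset.card_insert_le _ _) (by simp)

lemma not_hasJCol_zero : ¬ HasJCol (cycleGraph (m + 3)) 0 := by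
  rintro ⟨c, -⟩
  exact (c 0).elim0

lemma not_hasJCol_one : ¬ HasJCol (cycleGraph (m + 3)) 1 := by
  rintro ⟨c, hproper, -⟩
  exact hproper 0 (0 + 1) (adj_succ 0) (Subsingleton.elim _ _)

/-- In a 3-colour J-colouring, consecutive triples are rainbow. -/
lemma triple_distinct {c : Fin (m + 3) → Fin 3} (hc : IsJCol (cycleGraph (m + 3)) c)
    (v : Fin (m + 3)) : c (v - 1) ≠ c v ∧ c v ≠ c (v + 1) ∧ c (v - 1) ≠ c (v + 1) := by
  obtain ⟨hproper, hcov⟩ := hc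
  have h1 : c (v - 1) ≠ c v := fun h => hproper v (v - 1) (adj_pred v) h.symm
  have h2 : c v ≠ c (v + 1) := hproper v (v + 1) (adj_succ v)
  refine ⟨h1, h2, fun h13 => ?_⟩
  have ha : (c v).val < 3 := (c v).isLt
  have hb : (c (v + 1)).val < 3 := (c (v + 1)).isLt
  have hne : (c v).val ≠ (c (v + 1)).val := fun h => h2 (Fin.ext h)
  obtain ⟨t, ht3, hta, htb⟩ : ∃ t, t < 3 ∧ t ≠ (c v).val ∧ t ≠ (c (v + 1)).val :=
    ⟨3 - (c v).val - (c (v + 1)).val, by omega, by omega, by omega⟩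
  obtain ⟨u, hu, hcu⟩ := hcov v ⟨t, ht3⟩
  have hcase : u = v ∨ u = v + 1 ∨ u = v - 1 := by
    rcases hu with h | h
    · exact Or.inl h
    · rcases adj_iff.mp h with h | h
      · exact Or.inr (Or.inl h)
      · exact Or.inr (Or.inr (by rw [eq_sub_iff_add_eq, h]))
  rcases hcase with rfl | rfl | rfl
  · exact hta (by rw [hcu])
  · exact htb (by rw [hcu])
  · exact htb (by rw [h13] at hcu; rw [hcu])

/-- No 3-colour J-colouring when `3 ∤ n`. -/
lemma not_hasJCol_three (h3 : (m + 3) % 3 ≠ 0) : ¬ HasJCol (cycleGraph (m + 3)) 3 := by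
  rintro ⟨c, hc⟩
  set a : ℕ := ((c 1).val + 3 - (c 0).val) % 3 with ha_def
  have haa : a < 3 := Nat.mod_lt _ (by norm_num)
  have hc01 : (c 0).val ≠ (c 1).val := by
    intro h
    exact hc.1 0 (0 + 1) (adj_succ 0) (by rw [zero_add] at *; exact Fin.ext h)
  have ha0 : a ≠ 0 := by
    have h0 := (c 0).isLt
    have h1 := (c 1).isLt
    omega
  have step : ∀ v : Fin (m + 3), (c (v + 1)).val = ((c v).val + a) % 3 →
      (c (v + 1 + 1)).val = ((c (v + 1)).val + a) % 3 := by
    intro v hv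
    obtain ⟨d1, d2, d3⟩ := triple_distinct hc (v + 1)
    rw [add_sub_cancel_right] at d1 d3
    have hx := (c v).isLt
    have hy := (c (v + 1)).isLt
    have hz := (c (v + 1 + 1)).isLt
    have hd1 : (c v).val ≠ (c (v + 1)).val := fun h => d1 (Fin.ext h)
    have hd2 : (c (v + 1)).val ≠ (c (v + 1 + 1)).val := fun h => d2 (Fin.ext h)
    have hd3 : (c v).val ≠ (c (v + 1 + 1)).val := fun h => d3 (Fin.ext h)
    omega
  have stepAll : ∀ j : ℕ,
      (c ((j : Fin (m + 3)) + 1)).val = ((c (j : Fin (m + 3))).val + a) % 3 := by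
    intro j
    induction j with
    | zero =>
        have h0 := (c 0).isLt
        have h1 := (c 1).isLt
        simp only [Nat.cast_zero, zero_add]
        omega
    | succ j ih =>
        rw [cast_succ]
        exact step _ ih
  have key : ∀ j : ℕ, (c (j : Fin (m + 3))).val = ((c 0).val + j * a) % 3 := by
    intro j
    induction j with
    | zero => simp [Nat.mod_eq_of_lt (c 0).isLt]
    | succ j ih =>
        rw [cast_succ]
        have hs := stepAll j
        have hmul : (j + 1) * a = j * a + a := by ring
        have h0 := (c 0).isLt
        omega
  have hfin := key (m + 3)
  rw [Fin.natCast_self] at hfin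
  have h0 := (c 0).isLt
  have hdvd : 3 ∣ (m + 3) * a := by omega
  interval_cases a
  · omega
  · omega
  · omega

/-- No 2-colour J-colouring when `n` is odd. -/
lemma not_hasJCol_two (h2 : (m + 3) % 2 = 1) : ¬ HasJCol (cycleGraph (m + 3)) 2 := by
  rintro ⟨c, hproper, -⟩
  have step : ∀ v : Fin (m + 3), (c (v + 1)).val = ((c v).val + 1) % 2 := by
    intro v
    have hne := hproper v (v + 1) (adj_succ v)
    have h1 := (c v).isLt
    have h2 := (c (v + 1)).isLt
    have : (c v).val ≠ (c (v + 1)).val := fun h => hne (Fin.ext h)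
    omega
  have key : ∀ j : ℕ, (c (j : Fin (m + 3))).val = ((c 0).val + j) % 2 := by
    intro j
    induction j with
    | zero => simp [Nat.mod_eq_of_lt (c 0).isLt]
    | succ j ih =>
        rw [cast_succ]
        have hs := step (j : Fin (m + 3))
        have h0 := (c 0).isLt
        omega
  have hfin := key (m + 3)
  rw [Fin.natCast_self] at hfin
  have h0 := (c 0).isLt
  omega

/-- The mod-3 colouring is a J-colouring when `3 ∣ n`. -/
lemma hasJCol_three (h3 : (m + 3) % 3 = 0) : HasJCol (cycleGraph (m + 3)) 3 := by
  refine ⟨fun v => ⟨v.val % 3, Nat.mod_lt _ (by norm_num)⟩, fun u v hadj heq => ?_, ?_⟩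
  · have hval : u.val % 3 = v.val % 3 := congrArg Fin.val heq
    have hu := u.isLt
    have hv := v.isLt
    rcases adj_iff.mp hadj with rfl | rfl
    · have h := val_succ u
      split_ifs at h <;> omega
    · have h := val_succ v
      split_ifs at h <;> omega
  · intro v i
    have h1 := val_succ v
    have h2 := val_pred v
    have hv := v.isLt
    have hi := i.isLt
    have hcase : i.val = v.val % 3 ∨ i.val = ((v + 1 : Fin (m + 3))).val % 3 ∨
        i.val = ((v - 1 : Fin (m + 3))).val % 3 := by
      split_ifs at h1 h2 <;> omega
    rcases hcase with h | h | h
    · exact ⟨v, Or.inl rfl, Fin.ext h.symm⟩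
    · exact ⟨v + 1, Or.inr (adj_succ v), Fin.ext h.symm⟩
    · exact ⟨v - 1, Or.inr (adj_pred v), Fin.ext h.symm⟩

/-- The mod-2 colouring is a J-colouring when `n` is even. -/
lemma hasJCol_two (h2 : (m + 3) % 2 = 0) : HasJCol (cycleGraph (m + 3)) 2 := by
  refine ⟨fun v => ⟨v.val % 2, Nat.mod_lt _ (by norm_num)⟩, fun u v hadj heq => ?_, ?_⟩
  · have hval : u.val % 2 = v.val % 2 := congrArg Fin.val heq
    have hu := u.isLt
    have hv := v.isLt
    rcases adj_iff.mp hadj with rfl | rfl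
    · have h := val_succ u
      split_ifs at h <;> omega
    · have h := val_succ v
      split_ifs at h <;> omega
  · intro v i
    have h1 := val_succ v
    have hv := v.isLt
    have hi := i.isLt
    have hcase : i.val = v.val % 2 ∨ i.val = ((v + 1 : Fin (m + 3))).val % 2 := by
      split_ifs at h1 <;> omega
    rcases hcase with h | h
    · exact ⟨v, Or.inl rfl, Fin.ext h.symm⟩
    · exact ⟨v + 1, Or.inr (adj_succ v), Fin.ext h.symm⟩

lemma jnum_eq_three (h3 : HasJCol (cycleGraph (m + 3)) 3) :
    Jnum (cycleGraph (m + 3)) = 3 := by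
  apply le_antisymm
  · exact csSup_le ⟨3, h3⟩ fun k hk => k_le_three hk
  · exact le_csSup ⟨3, fun k hk => k_le_three hk⟩ h3

lemma jnum_eq_two (h2 : HasJCol (cycleGraph (m + 3)) 2)
    (hn3 : ¬ HasJCol (cycleGraph (m + 3)) 3) :
    Jnum (cycleGraph (m + 3)) = 2 := by
  apply le_antisymm
  · refine csSup_le ⟨2, h2⟩ fun k hk => ?_
    have hle := k_le_three hk
    by_contra h
    have : k = 3 := by omega
    exact hn3 (this ▸ hk)
  · exact le_csSup ⟨3, fun k hk => k_le_three hk⟩ h2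

end CycleJ

/-- For the cycle `C_n` (`n ≥ 3`): `J(C_n) = 3` if `3 ∣ n`; `J(C_n) = 2` if `n` is
even and `3 ∤ n`; and `C_n` has no J-colouring if `n` is odd and `3 ∤ n`. -/
theorem cycle_Jnum (n : ℕ) (hn : 3 ≤ n) :
    (n % 3 = 0 → HasJCol (SimpleGraph.cycleGraph n) 3 ∧
      Jnum (SimpleGraph.cycleGraph n) = 3) ∧
    (n % 2 = 0 ∧ n % 3 ≠ 0 → HasJCol (SimpleGraph.cycleGraph n) 2 ∧
      Jnum (SimpleGraph.cycleGraph n) = 2) ∧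
    (n % 2 = 1 ∧ n % 3 ≠ 0 → ¬∃ k, HasJCol (SimpleGraph.cycleGraph n) k) := by
  obtain ⟨m, rfl⟩ : ∃ m, n = m + 3 := ⟨n - 3, by omega⟩
  refine ⟨fun h3 => ?_, fun ⟨h2, h3⟩ => ?_, fun ⟨h2, h3⟩ => ?_⟩
  · have h := CycleJ.hasJCol_three h3
    exact ⟨h, CycleJ.jnum_eq_three h⟩
  · have h := CycleJ.hasJCol_two h2
    exact ⟨h, CycleJ.jnum_eq_two h (CycleJ.not_hasJCol_three h3)⟩
  · rintro ⟨k, hk⟩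
    have hk3 := CycleJ.k_le_three hk
    interval_cases k
    · exact CycleJ.not_hasJCol_zero hk
    · exact CycleJ.not_hasJCol_one hk
    · exact CycleJ.not_hasJCol_two h2 hk
    · exact CycleJ.not_hasJCol_three h3 hk
end

section
/- For n ≥ 2, the path P_n satisfies J(P_n) = 2. -/
open SimpleGraph

/-- For `n ≥ 2`, the path `P_n` satisfies `J(P_n) = 2`. -/
theorem path_Jnum (n : ℕ) (hn : 2 ≤ n) :
    HasJCol (SimpleGraph.pathGraph n) 2 ∧ Jnum (SimpleGraph.pathGraph n) = 2 := by
  have h2 : HasJCol (SimpleGraph.pathGraph n) 2 := by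
    refine ⟨fun v => ⟨v.val % 2, by omega⟩, ?_, ?_⟩
    · intro u v huv heq
      rw [SimpleGraph.pathGraph_adj] at huv
      have : u.val % 2 = v.val % 2 := congrArg Fin.val heq
      omega
    · intro v i
      by_cases hvi : (⟨v.val % 2, by omega⟩ : Fin 2) = i
      · exact ⟨v, Or.inl rfl, hvi⟩
      · have hne : v.val % 2 ≠ i.val := fun h => hvi (Fin.ext h)
        have hi : i.val = (v.val + 1) % 2 := by have := i.isLt; omega
        by_cases hlt : v.val + 1 < n
        · refine ⟨⟨v.val + 1, hlt⟩, Or.inr ?_, ?_⟩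
          · rw [SimpleGraph.pathGraph_adj]; left; rfl
          · exact Fin.ext (by simp [hi])
        · have hv1 : 1 ≤ v.val := by have := v.isLt; omega
          refine ⟨⟨v.val - 1, by omega⟩, Or.inr ?_, ?_⟩
          · rw [SimpleGraph.pathGraph_adj]; right; simp; omega
          · exact Fin.ext (by simp; omega)
  refine ⟨h2, ?_⟩
  have hub : ∀ k ∈ {k | HasJCol (SimpleGraph.pathGraph n) k}, k ≤ 2 := by
    intro k hk
    obtain ⟨c, _, hcov⟩ := hk
    set v0 : Fin n := ⟨0, by omega⟩ with hv0
    set v1 : Fin n := ⟨1, by omega⟩ with hv1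
    have hsub : (Finset.univ : Finset (Fin k)) ⊆ {c v0, c v1} := by
      intro i _
      obtain ⟨u, hu, hcu⟩ := hcov v0 i
      have hu' : u = v0 ∨ u = v1 := by
        rcases hu with h | h
        · exact Or.inl h
        · rw [SimpleGraph.pathGraph_adj] at h
          refine Or.inr (Fin.ext ?_)
          simp [hv0, hv1] at h ⊢
          omega
      rcases hu' with h | h <;> subst h <;> simp [← hcu]
    calc k = (Finset.univ : Finset (Fin k)).card := (Finset.card_fin k).symm
      _ ≤ ({c v0, c v1} : Finset (Fin k)).card := Finset.card_le_card hsub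
      _ ≤ 2 := (Finset.card_insert_le _ _).trans (by simp)
  exact le_antisymm (csSup_le ⟨2, h2⟩ hub) (le_csSup ⟨2, hub⟩ h2)
end

section
/- For n ≥ 3, the path P_n satisfies J*(P_n) = 3. -/
open SimpleGraph

lemma path_hasJStarCol (n : ℕ) (hn : 3 ≤ n) : HasJStarCol (SimpleGraph.pathGraph n) 3 := by
  refine ⟨fun v => ⟨v.val % 3, Nat.mod_lt _ (by norm_num)⟩, ?_, ?_⟩
  · intro u v huv
    rw [pathGraph_adj] at huv
    simp only [Fin.mk.injEq, ne_eq]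
    omega
  · rintro v ⟨a, b, hab, ha, hb⟩ i
    rw [pathGraph_adj] at ha hb
    have hab' : a.val ≠ b.val := fun h => hab (Fin.ext h)
    have hv1 : 1 ≤ v.val ∧ v.val + 1 < n := by
      have := a.isLt; have := b.isLt; omega
    have hi := i.isLt
    set m : ℕ := if v.val % 3 = i.val then v.val
      else if (v.val + 1) % 3 = i.val then v.val + 1 else v.val - 1 with hm
    have hmlt : m < n := by rw [hm]; split_ifs <;> omega
    have hmmod : m % 3 = i.val := by rw [hm]; split_ifs <;> omega
    have hmrange : (m + 1 = v.val ∨ v.val + 1 = m) ∨ m = v.val := by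
      rw [hm]; split_ifs <;> omega
    refine ⟨⟨m, hmlt⟩, ?_, ?_⟩
    · rcases hmrange with h | h
      · right; rw [pathGraph_adj]; simp; omega
      · left; exact Fin.ext h
    · exact Fin.ext (by simpa using hmmod)

lemma path_JStar_le (n : ℕ) (hn : 3 ≤ n) (k : ℕ) (hk : HasJStarCol (SimpleGraph.pathGraph n) k) :
    k ≤ 3 := by
  obtain ⟨c, hproper, hall⟩ := hk
  have h0 : (0 : ℕ) < n := by omega
  have h1 : (1 : ℕ) < n := by omega
  have h2 : (2 : ℕ) < n := by omega
  have hv : ∀ i : Fin k, ∃ u : Fin n, (u = ⟨1, h1⟩ ∨ (SimpleGraph.pathGraph n).Adj ⟨1, h1⟩ u) ∧ c u = i := by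
    apply hall
    refine ⟨⟨0, h0⟩, ⟨2, h2⟩, by simp [Fin.ext_iff], ?_, ?_⟩ <;>
      rw [pathGraph_adj] <;> simp
  choose u hu hcu using hv
  have hval : ∀ i, (u i).val < 3 := by
    intro i
    rcases hu i with h | h
    · rw [h]; norm_num
    · rw [pathGraph_adj] at h; simp at h; omega
  have hinj : Function.Injective (fun i => (⟨(u i).val, hval i⟩ : Fin 3)) := by
    intro i j hij
    simp only [Fin.mk.injEq] at hij
    rw [← hcu i, ← hcu j, Fin.ext hij]
  simpa using Fintype.card_le_of_injective _ hinj

/-- For `n ≥ 3`, the path `P_n` satisfies `J*(P_n) = 3`. -/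
theorem path_JStarNum (n : ℕ) (hn : 3 ≤ n) :
    HasJStarCol (SimpleGraph.pathGraph n) 3 ∧
    JStarNum (SimpleGraph.pathGraph n) = 3 := by
  have h3 := path_hasJStarCol n hn
  refine ⟨h3, ?_⟩
  apply le_antisymm
  · exact csSup_le ⟨3, h3⟩ (fun k hk => path_JStar_le n hn k hk)
  · exact le_csSup ⟨3, fun k hk => path_JStar_le n hn k hk⟩ h3
end

section
/- For n ≥ 3, the total graph T(P_n) of the path P_n satisfies J(T(P_n)) = 3. -/
open SimpleGraph

/-- The total graph `T(G)`: vertices are the vertices and edges of `G`; two elements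
are adjacent iff they are adjacent or incident in `G`. -/
def totalGraph {V : Type*} (G : SimpleGraph V) : SimpleGraph (V ⊕ G.edgeSet) where
  Adj x y :=
    match x, y with
    | Sum.inl u, Sum.inl v => G.Adj u v
    | Sum.inl u, Sum.inr e => u ∈ (e : Sym2 V)
    | Sum.inr e, Sum.inl u => u ∈ (e : Sym2 V)
    | Sum.inr e, Sum.inr f => e ≠ f ∧ ∃ u, u ∈ (e : Sym2 V) ∧ u ∈ (f : Sym2 V)
  symm := by
    constructor
    rintro (u | e) (v | f) h
    · exact h.symm
    · exact h
    · exact h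
    · exact ⟨h.1.symm, by obtain ⟨_, hu, hf⟩ := h.2; exact ⟨_, hf, hu⟩⟩
  loopless := by constructor; rintro (u | e) h
                 · exact G.irrefl h
                 · exact h.1 rfl


section Aux
open SimpleGraph
open Fin.NatCast

lemma fin3_cover (p : ℕ) (i : Fin 3) :
    ((p : Fin 3) = i) ∨ (((p+1 : ℕ) : Fin 3) = i) ∨ (((p+2 : ℕ) : Fin 3) = i) := by
  simp only [Fin.ext_iff, Fin.val_natCast]
  omega

lemma fin3_ne {p q : ℕ} (h1 : p < q) (h2 : q ≤ p + 2) : (p : Fin 3) ≠ (q : Fin 3) := by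
  simp only [Ne, Fin.ext_iff, Fin.val_natCast]
  omega

lemma path_edge_rep {n : ℕ} (e : Sym2 (Fin n)) (he : e ∈ (pathGraph n).edgeSet) :
    ∃ i j : Fin n, (j : ℕ) = (i : ℕ) + 1 ∧ e = s(i, j) := by
  induction e with
  | _ a b =>
    rw [SimpleGraph.mem_edgeSet, pathGraph_adj] at he
    rcases he with h | h
    · exact ⟨a, b, h.symm, rfl⟩
    · exact ⟨b, a, h.symm, Sym2.eq_swap⟩

def tpos {n : ℕ} : (Fin n ⊕ (pathGraph n).edgeSet) → ℕ
  | Sum.inl v => 2 * v.val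
  | Sum.inr e => 2 * (Sym2.lift ⟨fun a b => min a.val b.val, fun _ _ => min_comm _ _⟩ e.1) + 1

def tcol {n : ℕ} (x : Fin n ⊕ (pathGraph n).edgeSet) : Fin 3 := (tpos x : Fin 3)

lemma tcol_inl {n : ℕ} (v : Fin n) : tcol (Sum.inl v) = ((2 * v.val : ℕ) : Fin 3) := rfl

lemma tcol_edge {n : ℕ} (a b : Fin n) (h : s(a,b) ∈ (pathGraph n).edgeSet) :
    tcol (Sum.inr (⟨s(a,b), h⟩ : (pathGraph n).edgeSet))
      = ((2 * min a.val b.val + 1 : ℕ) : Fin 3) := by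
  simp [tcol, tpos]

lemma tcol_proper {n : ℕ} :
    ∀ x y, (totalGraph (pathGraph n)).Adj x y → tcol x ≠ tcol y := by
  rintro (u | ⟨e, he⟩) (v | ⟨f, hf⟩) h
  · have h' : (pathGraph n).Adj u v := h
    rw [pathGraph_adj] at h'
    rw [tcol_inl, tcol_inl]
    rcases h' with h' | h'
    · exact fin3_ne (by omega) (by omega)
    · exact (fin3_ne (p := 2 * v.val) (by omega) (by omega)).symm
  · have h' : u ∈ (f : Sym2 (Fin n)) := h
    obtain ⟨a, b, hab, rfl⟩ := path_edge_rep f hf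
    rw [tcol_inl, tcol_edge]
    rw [Sym2.mem_iff] at h'
    have hmin : min a.val b.val = a.val := by omega
    rcases h' with rfl | rfl
    · exact fin3_ne (by omega) (by omega)
    · exact (fin3_ne (by omega) (by omega)).symm
  · have h' : v ∈ (e : Sym2 (Fin n)) := h
    obtain ⟨a, b, hab, rfl⟩ := path_edge_rep e he
    rw [tcol_inl, tcol_edge]
    rw [Sym2.mem_iff] at h'
    have hmin : min a.val b.val = a.val := by omega
    rcases h' with rfl | rfl
    · exact (fin3_ne (by omega) (by omega)).symm
    · exact fin3_ne (by omega) (by omega)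
  · obtain ⟨hne, w, hwe, hwf⟩ := h
    obtain ⟨a, b, hab, rfl⟩ := path_edge_rep e he
    obtain ⟨a', b', hab', rfl⟩ := path_edge_rep f hf
    rw [tcol_edge, tcol_edge]
    rw [Sym2.mem_iff] at hwe hwf
    have hmin : min a.val b.val = a.val := by omega
    have hmin' : min a'.val b'.val = a'.val := by omega
    have hane : a.val ≠ a'.val := by
      intro hh
      apply hne
      have ha : a = a' := Fin.ext hh
      have hb : b = b' := Fin.ext (by omega)
      subst ha; subst hb; rfl
    have hdiff : a.val = a'.val + 1 ∨ a'.val = a.val + 1 := by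
      rcases hwe with rfl | rfl <;> rcases hwf with hw | hw <;> omega
    rcases hdiff with hd | hd
    · exact (fin3_ne (p := 2 * min a'.val b'.val + 1) (by omega) (by omega)).symm
    · exact fin3_ne (by omega) (by omega)

lemma tcol_isJCol {n : ℕ} (hn : 3 ≤ n) : IsJCol (totalGraph (pathGraph n)) (tcol (n := n)) := by
  refine ⟨tcol_proper, ?_⟩
  rintro (u | ⟨e, he⟩) i
  · by_cases h : u.val + 1 < n
    · set u' : Fin n := ⟨u.val + 1, h⟩ with hu'
      have hadj : (pathGraph n).Adj u u' := pathGraph_adj.mpr (Or.inl rfl)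
      rcases fin3_cover (2 * u.val) i with hc | hc | hc
      · exact ⟨Sum.inl u, Or.inl rfl, hc⟩
      · refine ⟨Sum.inr ⟨s(u, u'), (SimpleGraph.mem_edgeSet _).mpr hadj⟩, Or.inr (Sym2.mem_iff.mpr (Or.inl rfl)), ?_⟩
        rw [tcol_edge]
        have heq : 2 * min u.val u'.val + 1 = 2 * u.val + 1 := by
          have : u'.val = u.val + 1 := rfl
          omega
        rw [heq]; exact hc
      · refine ⟨Sum.inl u', Or.inr hadj, ?_⟩
        rw [tcol_inl]
        have heq : 2 * u'.val = 2 * u.val + 2 := by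
          have : u'.val = u.val + 1 := rfl
          omega
        rw [heq]; exact hc
    · have hu2 : 2 ≤ u.val := by have := u.isLt; omega
      set u' : Fin n := ⟨u.val - 1, by omega⟩ with hu'
      have hv : u'.val = u.val - 1 := rfl
      have hadj : (pathGraph n).Adj u' u := pathGraph_adj.mpr (Or.inl (by omega))
      rcases fin3_cover (2 * u.val - 2) i with hc | hc | hc
      · refine ⟨Sum.inl u', Or.inr hadj.symm, ?_⟩
        rw [tcol_inl]
        have heq : 2 * u'.val = 2 * u.val - 2 := by omega
        rw [heq]; exact hc
      · refine ⟨Sum.inr ⟨s(u', u), (SimpleGraph.mem_edgeSet _).mpr hadj⟩, Or.inr (Sym2.mem_iff.mpr (Or.inr rfl)), ?_⟩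
        rw [tcol_edge]
        have heq : 2 * min u'.val u.val + 1 = 2 * u.val - 2 + 1 := by omega
        rw [heq]; exact hc
      · refine ⟨Sum.inl u, Or.inl rfl, ?_⟩
        rw [tcol_inl]
        have heq : 2 * u.val = 2 * u.val - 2 + 2 := by omega
        rw [heq]; exact hc
  · obtain ⟨a, b, hab, rfl⟩ := path_edge_rep e he
    rcases fin3_cover (2 * a.val) i with hc | hc | hc
    · exact ⟨Sum.inl a, Or.inr (Sym2.mem_iff.mpr (Or.inl rfl)), hc⟩
    · refine ⟨Sum.inr ⟨s(a, b), he⟩, Or.inl rfl, ?_⟩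
      rw [tcol_edge]
      have heq : 2 * min a.val b.val + 1 = 2 * a.val + 1 := by omega
      rw [heq]; exact hc
    · refine ⟨Sum.inl b, Or.inr (Sym2.mem_iff.mpr (Or.inr rfl)), ?_⟩
      rw [tcol_inl]
      have heq : 2 * b.val = 2 * a.val + 2 := by omega
      rw [heq]; exact hc

lemma jcol_le_three {n : ℕ} (hn : 3 ≤ n) {k : ℕ}
    (hk : HasJCol (totalGraph (pathGraph n)) k) : k ≤ 3 := by
  by_contra hk4
  push_neg at hk4
  obtain ⟨c, hp, hcov⟩ := hk
  set v0 : Fin n := ⟨0, by omega⟩ with hv0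
  set v1 : Fin n := ⟨1, by omega⟩ with hv1
  have hvv0 : v0.val = 0 := rfl
  have hvv1 : v1.val = 1 := rfl
  have hadj01 : (pathGraph n).Adj v0 v1 := pathGraph_adj.mpr (Or.inl rfl)
  set E : (pathGraph n).edgeSet := ⟨s(v0, v1), hadj01⟩ with hE
  have key : ∀ u, (u = Sum.inl v0 ∨ (totalGraph (pathGraph n)).Adj (Sum.inl v0) u) →
      u = Sum.inl v0 ∨ u = Sum.inl v1 ∨ u = Sum.inr E := by
    rintro (w | ⟨f, hf⟩) h
    · rcases h with h | h
      · exact Or.inl h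
      · have h' : (pathGraph n).Adj v0 w := h
        rw [pathGraph_adj] at h'
        have hw1 : w.val = v1.val := by omega
        rw [Fin.ext hw1]
        exact Or.inr (Or.inl rfl)
    · rcases h with h | h
      · exact absurd h Sum.inr_ne_inl
      · have h' : v0 ∈ (f : Sym2 (Fin n)) := h
        obtain ⟨a, b, hab, rfl⟩ := path_edge_rep f hf
        rw [Sym2.mem_iff] at h'
        have ha : a = v0 := by
          rcases h' with rfl | rfl
          · rfl
          · exfalso
            omega
        subst ha
        have hb : b = v1 := Fin.ext (by omega)
        subst hb
        exact Or.inr (Or.inr rfl)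
  have hd : ∀ m : ℕ, m < 4 → m < k := fun m hm => by omega
  obtain ⟨u0, h0, hc0⟩ := hcov (Sum.inl v0) ⟨0, hd 0 (by omega)⟩
  obtain ⟨u1, h1, hc1⟩ := hcov (Sum.inl v0) ⟨1, hd 1 (by omega)⟩
  obtain ⟨u2, h2, hc2⟩ := hcov (Sum.inl v0) ⟨2, hd 2 (by omega)⟩
  obtain ⟨u3, h3, hc3⟩ := hcov (Sum.inl v0) ⟨3, hd 3 (by omega)⟩
  have k0 := key u0 h0
  have k1 := key u1 h1
  have k2 := key u2 h2
  have k3 := key u3 h3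
  rcases k0 with rfl | rfl | rfl <;> rcases k1 with rfl | rfl | rfl <;>
    rcases k2 with rfl | rfl | rfl <;> rcases k3 with rfl | rfl | rfl <;>
      first
        | exact absurd (hc0.symm.trans hc1) (by simp)
        | exact absurd (hc0.symm.trans hc2) (by simp)
        | exact absurd (hc0.symm.trans hc3) (by simp)
        | exact absurd (hc1.symm.trans hc2) (by simp)
        | exact absurd (hc1.symm.trans hc3) (by simp)
        | exact absurd (hc2.symm.trans hc3) (by simp)

end Aux

/-- For `n ≥ 3`, the total graph of the path `P_n` satisfies `J(T(P_n)) = 3`. -/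
theorem totalGraph_path_Jnum (n : ℕ) (hn : 3 ≤ n) :
    HasJCol (totalGraph (SimpleGraph.pathGraph n)) 3 ∧
    Jnum (totalGraph (SimpleGraph.pathGraph n)) = 3 := by
  have h3 : HasJCol (totalGraph (SimpleGraph.pathGraph n)) 3 := ⟨tcol, tcol_isJCol hn⟩
  refine ⟨h3, le_antisymm ?_ ?_⟩
  · exact csSup_le ⟨3, h3⟩ (fun k hk => jcol_le_three hn hk)
  · exact le_csSup ⟨3, fun k hk => jcol_le_three hn hk⟩ h3
end

section
/- For the complete graph K_n with n even and n/2 ≤ k ≤ n, the minimum number of edges whose removal yields a graph with J-chromatic number k is n − k; i.e., r_k^-(K_n) = n − k. -/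
open SimpleGraph

section Aux

/-- The edges of the partial matching: `{2j, 2j+1}` for `j < m`. -/
def medge (n m : ℕ) (h2 : 2 * m ≤ n) (j : Fin m) : Sym2 (Fin n) :=
  s(⟨2 * j.1, by have := j.2; omega⟩, ⟨2 * j.1 + 1, by have := j.2; omega⟩)

/-- The canonical colouring: matched pairs share a colour, the rest get fresh colours. -/
def pairCol (n k m : ℕ) (h2 : 2 * m ≤ n) (hm : m ≤ k) (hkm : k + m = n) (v : Fin n) :
    Fin k :=
  if h : v.1 < 2 * m then ⟨v.1 / 2, by omega⟩ else ⟨v.1 - m, by have := v.2; omega⟩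

/-- A representative vertex of each colour. -/
def repv (n k m : ℕ) (h2 : 2 * m ≤ n) (hkm : k + m = n) (j : Fin k) : Fin n :=
  if h : j.1 < m then ⟨2 * j.1, by omega⟩ else ⟨j.1 + m, by have := j.2; omega⟩

variable {n k m : ℕ} (h2 : 2 * m ≤ n) (hm : m ≤ k) (hkm : k + m = n)

lemma pairCol_val_lt {v : Fin n} (h : v.1 < 2 * m) :
    (pairCol n k m h2 hm hkm v).1 = v.1 / 2 := by
  unfold pairCol; rw [dif_pos h]

lemma pairCol_val_ge {v : Fin n} (h : ¬ v.1 < 2 * m) :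
    (pairCol n k m h2 hm hkm v).1 = v.1 - m := by
  unfold pairCol; rw [dif_neg h]

lemma repv_val_lt {j : Fin k} (h : j.1 < m) :
    (repv n k m h2 hkm j).1 = 2 * j.1 := by
  unfold repv; rw [dif_pos h]

lemma repv_val_ge {j : Fin k} (h : ¬ j.1 < m) :
    (repv n k m h2 hkm j).1 = j.1 + m := by
  unfold repv; rw [dif_neg h]

lemma mem_medge_iff {u v : Fin n} {j : Fin m} :
    s(u, v) = medge n m h2 j ↔
      (u.1 = 2 * j.1 ∧ v.1 = 2 * j.1 + 1) ∨ (v.1 = 2 * j.1 ∧ u.1 = 2 * j.1 + 1) := by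
  unfold medge
  rw [Sym2.eq_iff]
  constructor
  · rintro (⟨h1, h2⟩ | ⟨h1, h2⟩)
    · exact Or.inl ⟨congrArg Fin.val h1, congrArg Fin.val h2⟩
    · exact Or.inr ⟨congrArg Fin.val h2, congrArg Fin.val h1⟩
  · rintro (⟨h1, h2⟩ | ⟨h1, h2⟩)
    · exact Or.inl ⟨Fin.ext h1, Fin.ext h2⟩
    · exact Or.inr ⟨Fin.ext h2, Fin.ext h1⟩

/-- `pairCol` is constant on matched pairs. -/
lemma pairCol_medge {u v : Fin n} {j : Fin m} (hj : s(u, v) = medge n m h2 j) :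
    pairCol n k m h2 hm hkm u = pairCol n k m h2 hm hkm v := by
  rw [mem_medge_iff] at hj
  have hjm := j.2
  apply Fin.ext
  rcases hj with ⟨h1, h3⟩ | ⟨h1, h3⟩ <;>
    rw [pairCol_val_lt h2 hm hkm (by omega), pairCol_val_lt h2 hm hkm (by omega)] <;> omega

/-- Two distinct vertices with the same `pairCol` colour form a matching edge. -/
lemma pairCol_eq_iff {u v : Fin n} (hne : u ≠ v)
    (hc : pairCol n k m h2 hm hkm u = pairCol n k m h2 hm hkm v) :
    ∃ j : Fin m, s(u, v) = medge n m h2 j := by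
  have hval : (pairCol n k m h2 hm hkm u).1 = (pairCol n k m h2 hm hkm v).1 :=
    congrArg Fin.val hc
  have hnev : u.1 ≠ v.1 := fun h => hne (Fin.ext h)
  have hu2 := u.2
  have hv2 := v.2
  rcases Nat.lt_or_ge u.1 (2 * m) with hu | hu <;> rcases Nat.lt_or_ge v.1 (2 * m) with hv | hv
  · rw [pairCol_val_lt h2 hm hkm hu, pairCol_val_lt h2 hm hkm hv] at hval
    refine ⟨⟨u.1 / 2, by omega⟩, ?_⟩
    rw [mem_medge_iff]
    simp only
    omega
  · rw [pairCol_val_lt h2 hm hkm hu, pairCol_val_ge h2 hm hkm (by omega)] at hval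
    omega
  · rw [pairCol_val_ge h2 hm hkm (by omega), pairCol_val_lt h2 hm hkm hv] at hval
    omega
  · rw [pairCol_val_ge h2 hm hkm (by omega), pairCol_val_ge h2 hm hkm (by omega)] at hval
    omega

lemma pairCol_repv (j : Fin k) :
    pairCol n k m h2 hm hkm (repv n k m h2 hkm j) = j := by
  apply Fin.ext
  have hj2 := j.2
  rcases Nat.lt_or_ge j.1 m with h | h
  · have hv : (repv n k m h2 hkm j).1 = 2 * j.1 := repv_val_lt h2 hkm h
    rw [pairCol_val_lt h2 hm hkm (by omega), hv]
    omega
  · have hv : (repv n k m h2 hkm j).1 = j.1 + m := repv_val_ge h2 hkm (by omega)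
    rw [pairCol_val_ge h2 hm hkm (by omega), hv]
    omega

end Aux

section Graph

variable {n k m : ℕ} (h2 : 2 * m ≤ n) (hm : m ≤ k) (hkm : k + m = n)

lemma medge_injective : Function.Injective (medge n m h2) := by
  intro j1 j2 h
  unfold medge at h
  rw [Sym2.eq_iff] at h
  apply Fin.ext
  rcases h with ⟨h1, -⟩ | ⟨h1, -⟩ <;> have := congrArg Fin.val h1 <;> simp at this <;> omega

lemma medge_subset : Set.range (medge n m h2) ⊆ (⊤ : SimpleGraph (Fin n)).edgeSet := by
  rintro e ⟨j, rfl⟩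
  have hj := j.2
  rw [medge, mem_edgeSet, top_adj]
  intro h
  have := congrArg Fin.val h
  simp at this

lemma medge_ncard : (Set.range (medge n m h2)).ncard = m := by
  rw [← Nat.card_coe_set_eq, Nat.card_range_of_injective (medge_injective h2),
    Nat.card_eq_fintype_card, Fintype.card_fin]

lemma pairCol_isJCol :
    IsJCol ((⊤ : SimpleGraph (Fin n)).deleteEdges (Set.range (medge n m h2)))
      (pairCol n k m h2 hm hkm) := by
  constructor
  · intro u v hadj hc
    rw [deleteEdges_adj, top_adj] at hadj
    obtain ⟨j, hj⟩ := pairCol_eq_iff h2 hm hkm hadj.1 hc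
    exact hadj.2 ⟨j, hj.symm⟩
  · intro v i
    by_cases hvi : pairCol n k m h2 hm hkm v = i
    · exact ⟨v, Or.inl rfl, hvi⟩
    refine ⟨repv n k m h2 hkm i, Or.inr ?_, pairCol_repv h2 hm hkm i⟩
    have hne : repv n k m h2 hkm i ≠ v := by
      intro h
      exact hvi (by rw [← h, pairCol_repv h2 hm hkm])
    rw [deleteEdges_adj, top_adj]
    refine ⟨hne.symm, ?_⟩
    rintro ⟨j, hj⟩
    exact hvi ((pairCol_medge h2 hm hkm hj.symm).trans (pairCol_repv h2 hm hkm i))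

set_option maxHeartbeats 1000000 in
include hm hkm in
/-- Any J-colouring of `K_n` minus the matching identifies exactly the matched pairs,
so it uses exactly `k` colours. -/
lemma jcol_unique (hn : 0 < n) {k' : ℕ}
    (h : HasJCol ((⊤ : SimpleGraph (Fin n)).deleteEdges (Set.range (medge n m h2))) k') :
    k' = k := by
  obtain ⟨c, hp, hb⟩ := h
  set G' := (⊤ : SimpleGraph (Fin n)).deleteEdges (Set.range (medge n m h2)) with hG
  -- Step A: same colour on distinct vertices forces a matching edge
  have stepA : ∀ u v : Fin n, u ≠ v → c u = c v →
      ∃ j : Fin m, s(u, v) = medge n m h2 j := by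
    intro u v hne hc
    have hnadj : ¬ G'.Adj u v := fun hadj => hp _ _ hadj hc
    rw [hG, deleteEdges_adj, top_adj] at hnadj
    push_neg at hnadj
    obtain ⟨j, hj⟩ := hnadj hne
    exact ⟨j, hj.symm⟩
  -- Step B: matched pairs get the same colour
  have stepB : ∀ t : ℕ, t < m → ∀ (hb1 : 2 * t < n) (hb2 : 2 * t + 1 < n),
      c ⟨2 * t, hb1⟩ = c ⟨2 * t + 1, hb2⟩ := by
    intro t htm hb1 hb2
    by_contra hne
    obtain ⟨u, hu, hcu⟩ := hb ⟨2 * t, hb1⟩ (c ⟨2 * t + 1, hb2⟩)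
    rcases hu with rfl | hadj
    · exact hne hcu
    · rw [hG, deleteEdges_adj, top_adj] at hadj
      have hub : u ≠ ⟨2 * t + 1, hb2⟩ := by
        rintro rfl
        exact hadj.2 ⟨⟨t, htm⟩, by rw [medge]⟩
      obtain ⟨j', hj'⟩ := stepA u ⟨2 * t + 1, hb2⟩ hub hcu
      rw [mem_medge_iff] at hj'
      have hja : u.1 ≠ 2 * t := fun hh => hadj.1 (Fin.ext hh).symm
      have hj'2 := j'.2
      simp only [Fin.val_mk] at hj'
      omega
  -- the map sending each colour index to the c-colour of its representative is a bijection
  have hbij : Function.Bijective (fun j : Fin k => c (repv n k m h2 hkm j)) := by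
    constructor
    · intro j1 j2 hj
      by_contra hne
      have hrne : repv n k m h2 hkm j1 ≠ repv n k m h2 hkm j2 := by
        intro hr
        apply hne
        have := congrArg (pairCol n k m h2 hm hkm) hr
        rwa [pairCol_repv, pairCol_repv] at this
      obtain ⟨j, hj'⟩ := stepA _ _ hrne hj
      rw [mem_medge_iff] at hj'
      have hj2 := j.2
      have hj12 := j1.2
      have hj22 := j2.2
      have hfe : j1.1 ≠ j2.1 := fun hh => hne (Fin.ext hh)
      rcases Nat.lt_or_ge j1.1 m with ha | ha <;> rcases Nat.lt_or_ge j2.1 m with hc | hc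
      · have e1 := repv_val_lt h2 hkm ha
        have e2 := repv_val_lt h2 hkm hc
        omega
      · have e1 := repv_val_lt h2 hkm ha
        have e2 := repv_val_ge h2 hkm (j := j2) (by omega)
        omega
      · have e1 := repv_val_ge h2 hkm (j := j1) (by omega)
        have e2 := repv_val_lt h2 hkm hc
        omega
      · have e1 := repv_val_ge h2 hkm (j := j1) (by omega)
        have e2 := repv_val_ge h2 hkm (j := j2) (by omega)
        omega
    · intro i'
      obtain ⟨v, -, hv⟩ := hb ⟨0, hn⟩ i'
      have hv2 := v.2
      rcases Nat.lt_or_ge v.1 (2 * m) with hlt | hge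
      · refine ⟨⟨v.1 / 2, by omega⟩, ?_⟩
        set j : Fin k := ⟨v.1 / 2, by omega⟩ with hjdef
        have hjval : j.1 = v.1 / 2 := rfl
        have hjm : j.1 < m := by omega
        have e1 : (repv n k m h2 hkm j).1 = 2 * j.1 := repv_val_lt h2 hkm hjm
        show c (repv n k m h2 hkm j) = i'
        rcases Nat.even_or_odd v.1 with ⟨t, ht⟩ | ⟨t, ht⟩
        · have hrv : repv n k m h2 hkm j = v := Fin.ext (by omega)
          rw [hrv, hv]
        · have h1 : repv n k m h2 hkm j = ⟨2 * (v.1 / 2), by omega⟩ :=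
            Fin.ext (by rw [e1, hjval])
          have hB := stepB (v.1 / 2) (by omega) (by omega) (by omega)
          have h3 : (⟨2 * (v.1 / 2) + 1, by omega⟩ : Fin n) = v :=
            Fin.ext (by simp only [Fin.val_mk]; omega)
          rw [h1, hB, h3, hv]
      · refine ⟨⟨v.1 - m, by omega⟩, ?_⟩
        set j : Fin k := ⟨v.1 - m, by omega⟩ with hjdef
        have hjval : j.1 = v.1 - m := rfl
        have e1 : (repv n k m h2 hkm j).1 = j.1 + m := repv_val_ge h2 hkm (by omega)
        show c (repv n k m h2 hkm j) = i'
        have hrv : repv n k m h2 hkm j = v := Fin.ext (by omega)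
        rw [hrv, hv]
  have := Fintype.card_of_bijective hbij
  simpa using this.symm

end Graph

lemma jcol_lower {n k : ℕ} (E' : Set (Sym2 (Fin n)))
    (hcol : HasJCol ((⊤ : SimpleGraph (Fin n)).deleteEdges E') k) :
    n - k ≤ E'.ncard := by
  rcases le_or_gt n k with h | h
  · simp [Nat.sub_eq_zero_of_le h]
  obtain ⟨c, hproper, hnbhd⟩ := hcol
  have hn : 0 < n := lt_of_le_of_lt (Nat.zero_le k) h
  have hex : ∀ i : Fin k, ∃ u, c u = i := by
    intro i
    obtain ⟨u, _, hu⟩ := hnbhd ⟨0, hn⟩ i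
    exact ⟨u, hu⟩
  set r : Fin k → Fin n := fun i => (hex i).choose with hrdef
  have hcr : ∀ i, c (r i) = i := fun i => (hex i).choose_spec
  have hrinj : Function.Injective r := by
    intro i j hij
    rw [← hcr i, ← hcr j, hij]
  -- vertices that are not the chosen representative of their colour
  set S : Finset (Fin n) := Finset.univ.filter (fun v => v ≠ r (c v)) with hS
  have hScompl : Sᶜ = Finset.image r Finset.univ := by
    ext v
    simp only [hS, Finset.mem_compl, Finset.mem_filter, Finset.mem_univ, true_and,
      Finset.mem_image, not_not]
    constructor
    · intro hv; exact ⟨c v, hv.symm⟩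
    · rintro ⟨i, rfl⟩; rw [hcr]
  have hScard : S.card = n - k := by
    have h1 : Sᶜ.card = k := by
      rw [hScompl, Finset.card_image_of_injective _ hrinj, Finset.card_univ,
        Fintype.card_fin]
    have h2 : Sᶜ.card = Fintype.card (Fin n) - S.card := Finset.card_compl S
    have h3 : S.card ≤ Fintype.card (Fin n) := Finset.card_le_univ S
    rw [Fintype.card_fin] at h2 h3
    omega
  -- map each such vertex to the deleted edge joining it to its representative
  have hfin : E'.Finite := Set.toFinite E'
  have hmem : ∀ v ∈ S, s(v, r (c v)) ∈ hfin.toFinset := by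
    intro v hv
    rw [hS, Finset.mem_filter] at hv
    have hne : v ≠ r (c v) := hv.2
    have hnadj : ¬ ((⊤ : SimpleGraph (Fin n)).deleteEdges E').Adj v (r (c v)) := by
      intro hadj
      exact hproper _ _ hadj (by rw [hcr])
    rw [deleteEdges_adj, top_adj] at hnadj
    push_neg at hnadj
    rw [Set.Finite.mem_toFinset]
    exact hnadj hne
  have hinj : Set.InjOn (fun v => s(v, r (c v))) ↑S := by
    intro v hv w hw hvw
    simp only [hS, Finset.coe_filter, Set.mem_setOf_eq, Finset.mem_univ, true_and] at hv hw
    simp only [Sym2.eq_iff] at hvw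
    rcases hvw with ⟨rfl, -⟩ | ⟨h1, h2⟩
    · rfl
    · exfalso
      apply hv
      have hcw : c w = c v := by rw [← h2, hcr]
      exact h1.trans (congrArg r hcw)
  have := Finset.card_le_card_of_injOn (fun v => s(v, r (c v))) hmem hinj
  rw [hScard] at this
  rwa [Set.ncard_eq_toFinset_card _ hfin]


lemma jcol_lower_wrap {n k : ℕ} (E' : Set (Sym2 (Fin n)))
    (hcol : HasJCol ((⊤ : SimpleGraph (Fin n)).deleteEdges E') k) :
    n - k ≤ E'.ncard := jcol_lower E' hcol

/-- For `K_n` with `n` even and `n/2 ≤ k ≤ n`, the minimum number of edges whose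
removal yields a graph with J-chromatic number `k` is `n - k`. -/
theorem complete_rMinus (n k : ℕ) (hne : Even n) (hk : n / 2 ≤ k) (hkn : k ≤ n) :
    IsLeast {m : ℕ | ∃ E' : Set (Sym2 (Fin n)),
      E' ⊆ (⊤ : SimpleGraph (Fin n)).edgeSet ∧ E'.ncard = m ∧
      HasJCol ((⊤ : SimpleGraph (Fin n)).deleteEdges E') k ∧
      Jnum ((⊤ : SimpleGraph (Fin n)).deleteEdges E') = k} (n - k) := by
  constructor
  · -- membership: remove a matching of size n - k
    rcases Nat.eq_zero_or_pos n with hn0 | hn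
    · subst hn0
      have hk0 : k = 0 := Nat.le_zero.mp hkn
      subst hk0
      have hJ : ∀ k' : ℕ,
          HasJCol ((⊤ : SimpleGraph (Fin 0)).deleteEdges (∅ : Set (Sym2 (Fin 0)))) k' :=
        fun k' => ⟨fun v => v.elim0, fun u => u.elim0, fun v => v.elim0⟩
      refine ⟨∅, by simp, by simp, hJ 0, ?_⟩
      have hset : {k' | HasJCol ((⊤ : SimpleGraph (Fin 0)).deleteEdges
          (∅ : Set (Sym2 (Fin 0)))) k'} = Set.univ := by
        ext k'
        simp only [Set.mem_setOf_eq, Set.mem_univ, iff_true]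
        exact hJ k'
      rw [Jnum, hset, csSup_of_not_bddAbove (not_bddAbove_univ), csSup_empty]
      rfl
    · obtain ⟨t, ht⟩ := hne
      have h2 : 2 * (n - k) ≤ n := by omega
      have hm : n - k ≤ k := by omega
      have hkm : k + (n - k) = n := by omega
      refine ⟨Set.range (medge n (n - k) h2), medge_subset h2, medge_ncard h2,
        ⟨pairCol n k (n - k) h2 hm hkm, pairCol_isJCol h2 hm hkm⟩, ?_⟩
      have hset : {k' | HasJCol ((⊤ : SimpleGraph (Fin n)).deleteEdges
          (Set.range (medge n (n - k) h2))) k'} = {k} := by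
        ext k'
        simp only [Set.mem_setOf_eq, Set.mem_singleton_iff]
        constructor
        · exact jcol_unique h2 hm hkm hn
        · intro hkk
          rw [hkk]
          exact ⟨pairCol n k (n - k) h2 hm hkm, pairCol_isJCol h2 hm hkm⟩
      rw [Jnum, hset, csSup_singleton]
  · -- lower bound
    rintro mval ⟨E', -, hcard, hcol, -⟩
    rw [← hcard]
    exact jcol_lower_wrap E' hcol
end
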